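/- Let C be a strongly cyclic code of length n and dimension k over F_q with exactly s distinct nonzero weights. Then s ≤ (q^k − 1) / lcm(q−1, n). -/

import Mathlib

/-- The cyclic shift `ρ` on words of length `n`: `(ρ c) i = c (i - 1)`. -/
def cshift {F : Type*} {n : ℕ} (c : ZMod n → F) : ZMod n → F := fun i => c (i - 1)

/-- Hamming weight: the number of nonzero coordinates. -/
noncomputable def hwt {ι F : Type*} [Zero F] (c : ι → F) : ℕ := Set.ncard {i | c i ≠ 0}

/-- The period of a codeword: the smallest positive `t` with `ρ^t c = c`. -/
noncomputable def cperiod {F : Type*} {n : ℕ} (c : ZMod n → F) : ℕ :=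
  sInf {t : ℕ | 0 < t ∧ cshift^[t] c = c}

section aux
variable {F : Type*} {n : ℕ}

/-- shift by an element of `ZMod n` -/
def smAux (j : ZMod n) (c : ZMod n → F) : ZMod n → F := fun i => c (i - j)

lemma cshift_iterate (c : ZMod n → F) (t : ℕ) : cshift^[t] c = smAux (t : ZMod n) c := by
  induction t generalizing c with
  | zero => funext i; simp [smAux]
  | succ t ih =>
      rw [Function.iterate_succ_apply, ih]
      funext i
      simp only [smAux, cshift]
      push_cast
      ring_nf

lemma smAux_val [NeZero n] (j : ZMod n) (c : ZMod n → F) :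
    cshift^[j.val] c = smAux j c := by
  rw [cshift_iterate, ZMod.natCast_val, ZMod.cast_id]

lemma smAux_add (j j' : ZMod n) (c : ZMod n → F) :
    smAux j (smAux j' c) = smAux (j + j') c := by
  funext i; simp [smAux, sub_sub]

lemma smAux_zero (c : ZMod n → F) : smAux 0 c = c := by
  funext i; simp [smAux]

lemma smAux_smul [Field F] (j : ZMod n) (α : F) (c : ZMod n → F) :
    smAux j (α • c) = α • smAux j c := rfl

lemma smAux_ne_zero [Zero F] {c : ZMod n → F} (hc : c ≠ 0) (j : ZMod n) :
    smAux j c ≠ 0 := by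
  intro h
  apply hc
  have : smAux (-j) (smAux j c) = smAux (-j) 0 := by rw [h]
  rwa [smAux_add, neg_add_cancel, smAux_zero] at this
  -- smAux (-j) 0 = 0
  

lemma hwt_smAux [Zero F] (j : ZMod n) (c : ZMod n → F) : hwt (smAux j c) = hwt c := by
  unfold hwt smAux
  have : {i : ZMod n | c (i - j) ≠ 0} = (fun i => i + j) '' {i | c i ≠ 0} := by
    ext i
    simp only [Set.mem_image, Set.mem_setOf_eq]
    constructor
    · intro h; exact ⟨i - j, h, by ring⟩
    · rintro ⟨x, hx, rfl⟩; simpa using hx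
  rw [this, Set.ncard_image_of_injective _ (add_left_injective j)]

lemma hwt_smul [Field F] {α : F} (hα : α ≠ 0) (c : ZMod n → F) : hwt (α • c) = hwt c := by
  unfold hwt
  congr 1
  ext i
  simp [hα]

end aux

open Finset in
lemma orbit_card_ge {F : Type*} [Field F] [Fintype F] [DecidableEq F] {n : ℕ} [NeZero n]
    {c : ZMod n → F} (hc0 : c ≠ 0)
    (hper : ∀ j : ZMod n, smAux j c = c → j = 0) :
    Nat.lcm (Fintype.card F - 1) n ≤
      (Finset.image (fun p : Fˣ × ZMod n => (p.1 : F) • smAux p.2 c) Finset.univ).card := by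
  classical
  set f : Fˣ × ZMod n → (ZMod n → F) := fun p => (p.1 : F) • smAux p.2 c with hf
  -- uniqueness of scalar given shift
  have claim1 : ∀ (α α' : Fˣ) (j : ZMod n),
      (α : F) • smAux j c = (α' : F) • smAux j c → α = α' := by
    intro α α' j h
    obtain ⟨i, hi⟩ : ∃ i, smAux j c i ≠ 0 := by
      by_contra hco
      push_neg at hco
      exact smAux_ne_zero hc0 j (funext hco)
    have := congrFun h i
    simp only [Pi.smul_apply, smul_eq_mul] at this
    exact Units.ext (mul_right_cancel₀ hi this)
  -- uniqueness of shift given scalar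
  have claim2 : ∀ (j j' : ZMod n), smAux j c = smAux j' c → j = j' := by
    intro j j' h
    have : smAux (-j') (smAux j c) = smAux (-j') (smAux j' c) := by rw [h]
    rw [smAux_add, smAux_add, neg_add_cancel, smAux_zero] at this
    have := hper _ this
    linear_combination (norm := ring_nf) this
  -- generic stabilizer computation
  have stabkey : ∀ (α α' : Fˣ) (j j' : ZMod n),
      (α : F) • smAux j c = (α' : F) • smAux j' c →
      ((α'⁻¹ * α : Fˣ) : F) • smAux (j - j') c = c := by
    intro α α' j j' h
    have h2 : ((α'⁻¹ : Fˣ) : F) • smAux (-j') ((α : F) • smAux j c)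
        = ((α'⁻¹ : Fˣ) : F) • smAux (-j') ((α' : F) • smAux j' c) := by rw [h]
    rw [smAux_smul, smAux_smul, smAux_add, smAux_add, neg_add_cancel, smAux_zero,
      smul_smul, smul_smul] at h2
    simp only [Units.val_inv_eq_inv_val] at h2 ⊢
    rw [inv_mul_cancel₀ (Units.ne_zero α'), one_smul] at h2
    rw [Units.val_mul, Units.val_inv_eq_inv_val]
    convert h2 using 3
    ring
  -- the stabilizer finset
  set St : Finset (Fˣ × ZMod n) :=
    Finset.univ.filter (fun p : Fˣ × ZMod n => (p.1 : F) • smAux p.2 c = c) with hSt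
  -- the subgroup of scalars appearing in the stabilizer
  set T : Subgroup Fˣ :=
    { carrier := {α : Fˣ | ∃ j : ZMod n, (α : F) • smAux j c = c}
      one_mem' := ⟨0, by simp [smAux_zero]⟩
      mul_mem' := by
        rintro α α' ⟨j, hj⟩ ⟨j', hj'⟩
        refine ⟨j + j', ?_⟩
        have : (α : F) • smAux j ((α' : F) • smAux j' c) = (α : F) • smAux j c := by rw [hj']
        rw [smAux_smul, smAux_add, smul_smul] at this
        rw [Units.val_mul, this, hj]
      inv_mem' := by
        rintro α ⟨j, hj⟩
        refine ⟨-j, ?_⟩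
        have := stabkey 1 α 0 j (by simpa [smAux_zero] using hj.symm)
        simpa using this } with hT
  -- the additive subgroup of shifts appearing in the stabilizer
  set D : AddSubgroup (ZMod n) :=
    { carrier := {j : ZMod n | ∃ α : Fˣ, (α : F) • smAux j c = c}
      zero_mem' := ⟨1, by simp [smAux_zero]⟩
      add_mem' := by
        rintro j j' ⟨α, hj⟩ ⟨α', hj'⟩
        refine ⟨α * α', ?_⟩
        have : (α : F) • smAux j ((α' : F) • smAux j' c) = (α : F) • smAux j c := by rw [hj']
        rw [smAux_smul, smAux_add, smul_smul] at this
        rw [Units.val_mul, this, hj]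
      neg_mem' := by
        rintro j ⟨α, hj⟩
        refine ⟨α⁻¹, ?_⟩
        have := stabkey 1 α 0 j (by simpa [smAux_zero] using hj.symm)
        simpa using this } with hD
  -- |St| = |T|
  have cardT : St.card = Nat.card T := by
    have himg : St.image Prod.fst = Finset.univ.filter (fun α : Fˣ => α ∈ T) := by
      ext α
      simp only [Finset.mem_image, Finset.mem_filter, Finset.mem_univ, true_and, hSt]
      constructor
      · rintro ⟨p, hp, rfl⟩; exact ⟨p.2, hp⟩
      · rintro ⟨j, hj⟩; exact ⟨(α, j), hj, rfl⟩
    have hinj : Set.InjOn Prod.fst (St : Set (Fˣ × ZMod n)) := by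
      rintro ⟨α, j⟩ hp ⟨α', j'⟩ hp' (h : α = α')
      have hp2 : (α : F) • smAux j c = c := by simpa [hSt] using hp
      have hp2' : (α' : F) • smAux j' c = c := by simpa [hSt] using hp'
      subst h
      have : smAux j c = smAux j' c :=
        smul_right_injective _ (Units.ne_zero α) (hp2.trans hp2'.symm)
      exact Prod.ext rfl (claim2 _ _ this)
    rw [← Finset.card_image_of_injOn hinj, himg]
    rw [Nat.card_eq_fintype_card, Fintype.card_subtype]
  have cardD : St.card = Nat.card D := by
    have himg : St.image Prod.snd = Finset.univ.filter (fun j : ZMod n => j ∈ D) := by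
      ext j
      simp only [Finset.mem_image, Finset.mem_filter, Finset.mem_univ, true_and, hSt]
      constructor
      · rintro ⟨p, hp, rfl⟩; exact ⟨p.1, hp⟩
      · rintro ⟨α, hα⟩; exact ⟨(α, j), hα, rfl⟩
    have hinj : Set.InjOn Prod.snd (St : Set (Fˣ × ZMod n)) := by
      rintro ⟨α, j⟩ hp ⟨α', j'⟩ hp' (h : j = j')
      have hp2 : (α : F) • smAux j c = c := by simpa [hSt] using hp
      have hp2' : (α' : F) • smAux j' c = c := by simpa [hSt] using hp'
      subst h
      exact Prod.ext (claim1 _ _ _ (hp2.trans hp2'.symm)) rfl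
    rw [← Finset.card_image_of_injOn hinj, himg]
    rw [Nat.card_eq_fintype_card, Fintype.card_subtype]
  -- divisibility
  have hdvd1 : St.card ∣ Fintype.card F - 1 := by
    rw [cardT]
    have := Subgroup.card_subgroup_dvd_card T
    rwa [show Nat.card Fˣ = Fintype.card F - 1 by
      rw [Nat.card_eq_fintype_card, Fintype.card_units]] at this
  have hdvd2 : St.card ∣ n := by
    rw [cardD]
    have := AddSubgroup.card_addSubgroup_dvd_card D
    rwa [Nat.card_zmod] at this
  have hdvdg : St.card ∣ Nat.gcd (Fintype.card F - 1) n := Nat.dvd_gcd hdvd1 hdvd2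
  have hgpos : 0 < Nat.gcd (Fintype.card F - 1) n :=
    Nat.gcd_pos_of_pos_right _ (Nat.pos_of_ne_zero (NeZero.ne n))
  have hStle : St.card ≤ Nat.gcd (Fintype.card F - 1) n := Nat.le_of_dvd hgpos hdvdg
  -- fiber bound
  have hfiber : ∀ v ∈ Finset.univ.image f,
      (Finset.univ.filter (fun p => f p = v)).card ≤ Nat.gcd (Fintype.card F - 1) n := by
    intro v hv
    obtain ⟨p₀, -, hp₀⟩ := Finset.mem_image.mp hv
    refine le_trans ?_ hStle
    apply Finset.card_le_card_of_injOn (fun p => (p₀.1⁻¹ * p.1, p.2 - p₀.2))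
    · intro p hp
      simp only [Finset.mem_coe, Finset.mem_filter, Finset.mem_univ, true_and] at hp
      simp only [hSt, Finset.mem_coe, Finset.mem_filter, Finset.mem_univ, true_and]
      exact stabkey p.1 p₀.1 p.2 p₀.2 (hp.trans hp₀.symm)
    · intro p _ p' _ h
      have h1 : p₀.1⁻¹ * p.1 = p₀.1⁻¹ * p'.1 := congrArg Prod.fst h
      have h2 : p.2 - p₀.2 = p'.2 - p₀.2 := congrArg Prod.snd h
      exact Prod.ext (mul_left_cancel h1) (by linear_combination (norm := ring_nf) h2)
  -- count
  have hcount : Fintype.card (Fˣ × ZMod n) ≤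
      Nat.gcd (Fintype.card F - 1) n * (Finset.univ.image f).card := by
    have := Finset.card_le_mul_card_image (f := f) (Finset.univ : Finset (Fˣ × ZMod n))
      (Nat.gcd (Fintype.card F - 1) n) hfiber
    simpa using this
  have hcardprod : Fintype.card (Fˣ × ZMod n) = (Fintype.card F - 1) * n := by
    rw [Fintype.card_prod, Fintype.card_units, ZMod.card]
  rw [hcardprod] at hcount
  rw [← Nat.gcd_mul_lcm (Fintype.card F - 1) n] at hcount
  exact Nat.le_of_mul_le_mul_left hcount hgpos


/-- If `C` is an `[n,k]_q` strongly cyclic code (every nonzero codeword has period `n`)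
with exactly `s` nonzero weights, then `s ≤ (q^k - 1) / lcm(q-1, n)`. -/
theorem stmt2 {F : Type*} [Field F] [Fintype F] {n k : ℕ} [NeZero n]
    (q : ℕ) (hq : q = Fintype.card F)
    (C : Submodule F (ZMod n → F)) (hcyc : ∀ c ∈ C, cshift c ∈ C)
    (hstrong : ∀ c ∈ C, c ≠ 0 → cperiod c = n)
    (hk : Module.finrank F C = k)
    (s : ℕ) (hs : s = Set.ncard {w : ℕ | ∃ c ∈ C, c ≠ 0 ∧ hwt c = w}) :
    (s : ℚ) ≤ ((q : ℚ) ^ k - 1) / (Nat.lcm (q - 1) n) := by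
  classical
  have hq2 : 1 < Fintype.card F := Fintype.one_lt_card
  have hn : 0 < n := Nat.pos_of_ne_zero (NeZero.ne n)
  subst hq hk hs
  set q := Fintype.card F with hqdef
  set k := Module.finrank F C with hkdef
  set L := Nat.lcm (q - 1) n with hL
  have hLpos : 0 < L := Nat.pos_of_ne_zero (Nat.lcm_ne_zero (by omega) (by omega))
  -- the finset of nonzero codewords
  set CF : Finset (ZMod n → F) := Finset.univ.filter (· ∈ C) with hCF
  set N : Finset (ZMod n → F) := CF.erase 0 with hN
  have hmemN : ∀ c, c ∈ N ↔ c ∈ C ∧ c ≠ 0 := by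
    intro c
    simp only [hN, hCF, Finset.mem_erase, Finset.mem_filter, Finset.mem_univ, true_and]
    tauto
  have hcardCF : CF.card = q ^ k := by
    rw [hCF, ← Fintype.card_subtype, ← Nat.card_eq_fintype_card,
      Nat.card_eq_fintype_card (α := C), Module.card_eq_pow_finrank (K := F) (V := C)]
  have hcardN : N.card = q ^ k - 1 := by
    rw [hN, Finset.card_erase_of_mem, hcardCF]
    simp only [hCF, Finset.mem_filter, Finset.mem_univ, true_and]
    exact C.zero_mem
  -- the finset of weights
  set W : Finset ℕ := N.image hwt with hW
  have hWset : {w : ℕ | ∃ c ∈ C, c ≠ 0 ∧ hwt c = w} = ↑W := by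
    ext w
    simp only [Set.mem_setOf_eq, hW, Finset.coe_image, Set.mem_image, Finset.mem_coe]
    constructor
    · rintro ⟨c, hc, hc0, rfl⟩; exact ⟨c, (hmemN c).mpr ⟨hc, hc0⟩, rfl⟩
    · rintro ⟨c, hc, rfl⟩; obtain ⟨h1, h2⟩ := (hmemN c).mp hc; exact ⟨c, h1, h2, rfl⟩
  have hsW : Set.ncard {w : ℕ | ∃ c ∈ C, c ≠ 0 ∧ hwt c = w} = W.card := by
    rw [hWset, Set.ncard_coe_finset]
  rw [hsW]
  -- representatives
  have hrepex : ∀ w : ℕ, ∃ c, w ∈ W → (c ∈ C ∧ c ≠ 0) ∧ hwt c = w := by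
    intro w
    by_cases hw : w ∈ W
    · obtain ⟨c, hc, hcw⟩ := Finset.mem_image.mp hw
      exact ⟨c, fun _ => ⟨(hmemN c).mp hc, hcw⟩⟩
    · exact ⟨0, fun h => absurd h hw⟩
  choose rep hrep using hrepex
  -- shift closure
  have hshiftmem : ∀ c ∈ C, ∀ t : ℕ, cshift^[t] c ∈ C := by
    intro c hc t
    induction t with
    | zero => simpa using hc
    | succ t ih => rw [Function.iterate_succ_apply']; exact hcyc _ ih
  have hsmmem : ∀ c ∈ C, ∀ j : ZMod n, smAux j c ∈ C := by
    intro c hc j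
    rw [← smAux_val]
    exact hshiftmem c hc _
  -- period property
  have hper : ∀ c ∈ C, c ≠ 0 → ∀ j : ZMod n, smAux j c = c → j = 0 := by
    intro c hc hc0 j hj
    by_contra hj0
    have h1 : 0 < j.val := ZMod.val_pos.mpr hj0
    have h2 : j.val < n := ZMod.val_lt j
    have h3 : cperiod c ≤ j.val := Nat.sInf_le ⟨h1, by rw [smAux_val]; exact hj⟩
    rw [hstrong c hc hc0] at h3
    omega
  -- orbits
  set orb : ℕ → Finset (ZMod n → F) := fun w =>
    Finset.image (fun p : Fˣ × ZMod n => (p.1 : F) • smAux p.2 (rep w)) Finset.univ with horb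
  have horbsub : ∀ w ∈ W, orb w ⊆ N := by
    intro w hw x hx
    obtain ⟨p, -, rfl⟩ := Finset.mem_image.mp hx
    obtain ⟨⟨hC, h0⟩, -⟩ := hrep w hw
    refine (hmemN _).mpr ⟨C.smul_mem _ (hsmmem _ hC _), ?_⟩
    exact smul_ne_zero (Units.ne_zero p.1) (smAux_ne_zero h0 p.2)
  have horbwt : ∀ w ∈ W, ∀ x ∈ orb w, hwt x = w := by
    intro w hw x hx
    obtain ⟨p, -, rfl⟩ := Finset.mem_image.mp hx
    rw [hwt_smul (Units.ne_zero p.1), hwt_smAux]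
    exact (hrep w hw).2
  have horbcard : ∀ w ∈ W, L ≤ (orb w).card := by
    intro w hw
    obtain ⟨⟨hC, h0⟩, -⟩ := hrep w hw
    exact orbit_card_ge h0 (hper _ hC h0)
  have hdisj : ∀ w ∈ W, ∀ w' ∈ W, w ≠ w' → Disjoint (orb w) (orb w') := by
    intro w hw w' hw' hne
    rw [Finset.disjoint_left]
    intro x hx hx'
    exact hne ((horbwt w hw x hx).symm.trans (horbwt w' hw' x hx'))
  -- counting
  have hcount : W.card * L ≤ q ^ k - 1 := by
    calc W.card * L = ∑ _w ∈ W, L := by rw [Finset.sum_const, smul_eq_mul]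
      _ ≤ ∑ w ∈ W, (orb w).card := Finset.sum_le_sum horbcard
      _ = (W.biUnion orb).card := (Finset.card_biUnion hdisj).symm
      _ ≤ N.card := Finset.card_le_card (Finset.biUnion_subset.mpr horbsub)
      _ = q ^ k - 1 := hcardN
  -- conclude over ℚ
  have hLQ : (0 : ℚ) < (L : ℚ) := by exact_mod_cast hLpos
  rw [le_div_iff₀ hLQ]
  have h1q : 1 ≤ q ^ k := Nat.one_le_pow _ _ (by omega)
  calc (W.card : ℚ) * L = ((W.card * L : ℕ) : ℚ) := by push_cast; ring
    _ ≤ ((q ^ k - 1 : ℕ) : ℚ) := by exact_mod_cast hcount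
    _ = (q : ℚ) ^ k - 1 := by push_cast [h1q]; ring
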